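/- Let X = {x₁,...,x_{n+2}} be a tight Grassmannian frame for R^n at angle α such that some subset of n+1 vectors, say {x₁,...,x_{n+1}}, is equiangular at angle α. Then |⟨xⱼ, x_{n+2}⟩| takes the same value β for all j ∈ [n+1], and the tight frame conditions 1 + nα² + β² = (n+2)/n and 1 + (n+1)β² = (n+2)/n force α = β. -/

import Mathlib

open scoped RealInnerProductSpace
abbrev E (n : ℕ) := EuclideanSpace ℝ (Fin n)
noncomputable def cohF {n m : ℕ} (x : Fin m → E n) : ℝ :=
  sSup {r : ℝ | ∃ i j : Fin m, i ≠ j ∧ r = |⟪x i, x j⟫|}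

theorem tight_equiangular_subset_forces {n : ℕ} (hn : 0 < n)
    (x : Fin (n + 2) → E n) (hunit : ∀ i, ‖x i‖ = 1)
    (htight : ∀ v : E n, ∑ i, ⟪x i, v⟫ • x i = (((n : ℝ) + 2) / n) • v)
    (α : ℝ) (hα : cohF x = α)
    (hequi : ∀ i j : Fin (n + 2), i ≠ j → i ≠ Fin.last (n + 1) → j ≠ Fin.last (n + 1) →
      |⟪x i, x j⟫| = α) :
    ∃ β : ℝ, (∀ j : Fin (n + 2), j ≠ Fin.last (n + 1) → |⟪x j, x (Fin.last (n + 1))⟫| = β) ∧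
      1 + n * α ^ 2 + β ^ 2 = ((n : ℝ) + 2) / n ∧
      1 + ((n : ℝ) + 1) * β ^ 2 = ((n : ℝ) + 2) / n ∧
      α = β := by
  classical
  set L := Fin.last (n + 1) with hLdef
  have hnR : (0 : ℝ) < n := by exact_mod_cast hn
  -- inner products with self
  have hself : ∀ j, ⟪x j, x j⟫ = 1 := by
    intro j
    rw [real_inner_self_eq_norm_sq, hunit]; norm_num
  -- key identity from tightness
  have key : ∀ j : Fin (n + 2), ∑ i, ⟪x i, x j⟫ ^ 2 = ((n : ℝ) + 2) / n := by
    intro j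
    have h2 := congrArg (fun v => ⟪v, x j⟫) (htight (x j))
    simp only [sum_inner, real_inner_smul_left, hself j, mul_one] at h2
    calc ∑ i, ⟪x i, x j⟫ ^ 2 = ∑ i, ⟪x i, x j⟫ * ⟪x i, x j⟫ := by
          simp [pow_two]
      _ = ((n : ℝ) + 2) / n := h2
  -- α is nonneg
  have h0L : (0 : Fin (n + 2)) ≠ L := Fin.ne_of_val_ne (by simp [hLdef] <;> omega)
  have h1L : (1 : Fin (n + 2)) ≠ L := Fin.ne_of_val_ne (by simp [hLdef] <;> omega)
  have h01 : (0 : Fin (n + 2)) ≠ 1 := by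
    simp [Fin.ext_iff]
  have hαnn : 0 ≤ α := by
    rw [← hequi 0 1 h01 h0L h1L]; exact abs_nonneg _
  -- sum splitting for j ≠ L
  have hb : ∀ j : Fin (n + 2), j ≠ L →
      1 + (n : ℝ) * α ^ 2 + ⟪x j, x L⟫ ^ 2 = ((n : ℝ) + 2) / n := by
    intro j hj
    have hk := key j
    have hjmem : j ∈ (Finset.univ : Finset (Fin (n + 2))) := Finset.mem_univ j
    rw [← Finset.add_sum_erase _ _ hjmem] at hk
    have hLmem : L ∈ (Finset.univ : Finset (Fin (n + 2))).erase j :=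
      Finset.mem_erase.mpr ⟨fun h => hj h.symm, Finset.mem_univ L⟩
    rw [← Finset.add_sum_erase _ _ hLmem] at hk
    have hrest : ∑ i ∈ ((Finset.univ.erase j).erase L), ⟪x i, x j⟫ ^ 2
        = (n : ℝ) * α ^ 2 := by
      rw [Finset.sum_congr rfl (fun i hi => ?_), Finset.sum_const, nsmul_eq_mul]
      · congr 1
        have : ((Finset.univ.erase j).erase L).card = n := by
          rw [Finset.card_erase_of_mem hLmem, Finset.card_erase_of_mem hjmem]
          simp
        rw [this]
      · have hi' := Finset.mem_erase.mp hi
        have hi'' := Finset.mem_erase.mp hi'.2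
        have := hequi i j hi''.1 hi'.1 hj
        rw [← sq_abs, this]
    rw [hself j, hrest] at hk
    have hsym : ⟪x L, x j⟫ = ⟪x j, x L⟫ := real_inner_comm _ _
    rw [hsym] at hk
    ring_nf at hk ⊢
    linarith [hk]
  -- sum at L
  have hL : 1 + ((n : ℝ) + 1) * (((n : ℝ) + 2) / n - 1 - n * α ^ 2)
      = ((n : ℝ) + 2) / n := by
    have hk := key L
    have hLmem : L ∈ (Finset.univ : Finset (Fin (n + 2))) := Finset.mem_univ L
    rw [← Finset.add_sum_erase _ _ hLmem, hself L] at hk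
    have hrest : ∑ i ∈ (Finset.univ.erase L), ⟪x i, x L⟫ ^ 2
        = ((n : ℝ) + 1) * (((n : ℝ) + 2) / n - 1 - n * α ^ 2) := by
      rw [Finset.sum_congr rfl (fun i hi => ?_), Finset.sum_const, nsmul_eq_mul]
      · congr 1
        have : (Finset.univ.erase L).card = n + 1 := by
          rw [Finset.card_erase_of_mem hLmem]; simp
        rw [this]; push_cast; ring
      · have hi' := (Finset.mem_erase.mp hi).1
        have := hb i hi'
        linarith
    rw [hrest] at hk
    norm_num at hk
    linarith
  -- solve: α ^ 2 = c where c is the common value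
  have hc : α ^ 2 = ((n : ℝ) + 2) / n - 1 - n * α ^ 2 := by
    have h2 : ((n : ℝ) + 1) * (((n : ℝ) + 2) / n - 1 - n * α ^ 2) = 2 / n := by
      have : ((n : ℝ) + 2) / n - 1 = 2 / n := by field_simp; ring
      linarith [hL]
    have h3 : ((n : ℝ) + 2) / n - 1 = 2 / n := by field_simp; ring
    -- (n+1) c = 2/n and c = 2/n - nα² ⟹ α² = c
    set c := ((n : ℝ) + 2) / n - 1 - n * α ^ 2 with hcdef
    clear_value c
    have h4 : (n : ℝ) * α ^ 2 = 2 / n - c := by rw [hcdef]; linarith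
    have h6 : (n : ℝ) * c = 2 / n - c := by linear_combination h2
    have h5 : (n : ℝ) * α ^ 2 = (n : ℝ) * c := by linarith
    have := mul_left_cancel₀ (ne_of_gt hnR) h5
    linarith
  refine ⟨α, ?_, ?_, ?_, rfl⟩
  · intro j hj
    have h1 := hb j hj
    have h2 : ⟪x j, x L⟫ ^ 2 = α ^ 2 := by linarith [hc]
    have h3 : |⟪x j, x L⟫| ^ 2 = α ^ 2 := by rw [sq_abs]; exact h2
    nlinarith [abs_nonneg ⟪x j, x L⟫, hαnn, h3]
  · have := hb 0 h0L
    have h2 : ⟪x 0, x L⟫ ^ 2 = α ^ 2 := by linarith [hc]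
    linarith
  · linarith [hL, hc]
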